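/- The two formulations of Martin-Löf randomness coincide: an infinite binary sequence x passes every Martin-Löf test in sense 1 (every partial computable t : B → ℕ with Pr{b : t(b)↓ ≥ m} ≤ 2^{-m} for all m, passing meaning {t(x[n]) : t(x[n])↓} is bounded) if and only if x passes every Martin-Löf test in sense 2 (every total computable f : ℕ → ℕ with Pr(O(W_{f(n)})) ≤ 2^{-n} for all n, passing meaning x ∉ ⋂_n O(W_{f(n)})). -/

import Mathlib

open MeasureTheory
open scoped ENNReal

/-- The length-`n` initial segment of an infinite binary sequence. -/
def pref (x : ℕ → Bool) (n : ℕ) : List Bool := List.ofFn (fun i : Fin n => x i)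

/-- A set of binary strings is prefix-free if no member is a proper prefix of another. -/
def PFree (S : Set (List Bool)) : Prop := ∀ a ∈ S, ∀ b ∈ S, a <+: b → a = b

/-- Kolmogorov complexity of `b` relative to machine `M`: the least length of an
input mapped by `M` to `b`, `∞` if there is none. -/
noncomputable def Cpx (M : List Bool →. List Bool) (b : List Bool) : ℕ∞ :=
  sInf {n : ℕ∞ | ∃ p : List Bool, b ∈ M p ∧ (p.length : ℕ∞) = n}

/-- A universal machine for plain complexity. -/
def Universal (U : List Bool →. List Bool) : Prop :=
  Partrec U ∧ ∀ L : List Bool →. List Bool, Partrec L →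
    ∃ k : ℕ, ∀ b : List Bool, Cpx U b ≤ Cpx L b + (k : ℕ∞)

/-- A prefix-free universal machine: prefix-free domain, universal among machines
with prefix-free domain. -/
def PFUniversal (V : List Bool →. List Bool) : Prop :=
  Partrec V ∧ PFree {p | (V p).Dom} ∧
    ∀ L : List Bool →. List Bool, Partrec L → PFree {p | (L p).Dom} →
      ∃ k : ℕ, ∀ b : List Bool, Cpx V b ≤ Cpx L b + (k : ℕ∞)

/-- `cyl S` is the set of infinite binary sequences extending some member of `S`. -/
def cyl (S : Set (List Bool)) : Set (ℕ → Bool) := {x | ∃ b ∈ S, pref x b.length = b}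

/-- The `e`-th computably enumerable set of binary strings. -/
def W (e : ℕ) : Set (List Bool) :=
  {b | ((Denumerable.ofNat Nat.Partrec.Code e).eval (Encodable.encode b)).Dom}

/-- The binary-digit expansion of a real number. -/
noncomputable def binSeq (r : ℝ) : ℕ → Bool := fun n => decide (⌊r * 2 ^ (n + 1)⌋ % 2 = 1)

/-- The fair-coin (uniform product) measure on Cantor space, as the pushforward of
Lebesgue measure on `(0,1]` under binary expansion. -/
noncomputable def coin : Measure (ℕ → Bool) :=
  Measure.map binSeq (volume.restrict (Set.Ioc (0 : ℝ) 1))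

/-- Martin-Löf test in sense 2. -/
def MLTest (f : ℕ → ℕ) : Prop :=
  Computable f ∧ ∀ n : ℕ, coin (cyl (W (f n))) ≤ (2 : ℝ≥0∞)⁻¹ ^ n

/-- `x` fails the sense-2 test `f`. -/
def Fails (x : ℕ → Bool) (f : ℕ → ℕ) : Prop := ∀ n : ℕ, x ∈ cyl (W (f n))

/-- Martin-Löf randomness (sense 2). -/
def MLRandom (x : ℕ → Bool) : Prop := ∀ f : ℕ → ℕ, MLTest f → ¬ Fails x f

/-- The dyadic rational value of a finite binary string. -/
noncomputable def sval (b : List Bool) : ℝ :=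
  ∑ i : Fin b.length, if b.get i then ((2 : ℝ))⁻¹ ^ (i.val + 1) else 0

/-- Chaitin's halting probability of machine `V`. -/
noncomputable def Omega (V : List Bool →. List Bool) : ℝ :=
  ∑' p : {p : List Bool // (V p).Dom}, ((2 : ℝ))⁻¹ ^ (p.val.length)

/-- Martin-Löf test in sense 1. -/
def MLTest1 (t : List Bool →. ℕ) : Prop :=
  Partrec t ∧ ∀ m : ℕ, coin (cyl {b | ∃ v ∈ t b, m ≤ v}) ≤ (2 : ℝ≥0∞)⁻¹ ^ m

/-- `x` passes the sense-1 test `t`: the values of `t` on `x`'s prefixes are bounded. -/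
def Passes1 (x : ℕ → Bool) (t : List Bool →. ℕ) : Prop :=
  ∃ B : ℕ, ∀ (n : ℕ) (v : ℕ), v ∈ t (pref x n) → v ≤ B

/-- A set of binary strings is computably enumerable. -/
def CE (S : Set (List Bool)) : Prop :=
  ∃ f : List Bool →. ℕ, Partrec f ∧ S = {b | (f b).Dom}

section ML16

open Nat.Partrec (Code)
open Nat.Partrec.Code
open Encodable

/-! ### List / prefix helpers -/

lemma ml16_pref_length (x : ℕ → Bool) (n : ℕ) : (pref x n).length = n := by
  simp [pref]

lemma ml16_take_pref (x : ℕ → Bool) {m n : ℕ} (h : m ≤ n) :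
    (pref x n).take m = pref x m := by
  apply List.ext_getElem
  · simp [pref, h]
  · intro i h1 h2
    simp [pref, List.getElem_take]

lemma ml16_prefix_pref {x : ℕ → Bool} {p : List Bool} {n : ℕ} (h : p <+: pref x n) :
    pref x p.length = p := by
  have hl : p.length ≤ n := by simpa [ml16_pref_length] using h.length_le
  calc pref x p.length = (pref x n).take p.length := (ml16_take_pref x hl).symm
    _ = p := (List.prefix_iff_eq_take.mp h).symm

lemma ml16_cyl_mono {S T : Set (List Bool)} (h : S ⊆ T) : cyl S ⊆ cyl T := by
  rintro y ⟨b, hb, he⟩; exact ⟨b, h hb, he⟩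

lemma ml16_cyl_prefix (S : Set (List Bool)) :
    cyl {b | ∃ p, p <+: b ∧ p ∈ S} ⊆ cyl S := by
  rintro y ⟨b, ⟨p, hpb, hpS⟩, he⟩
  refine ⟨p, hpS, ml16_prefix_pref (n := b.length) ?_⟩
  rw [he]; exact hpb

/-! ### coin measure facts -/

lemma ml16_binSeq_measurable : Measurable binSeq := by
  apply measurable_pi_lambda
  intro n
  show Measurable fun r : ℝ => decide (⌊r * 2 ^ (n + 1)⌋ % 2 = 1)
  have h1 : Measurable fun r : ℝ => r * 2 ^ (n + 1) := measurable_id.mul_const _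
  exact Measurable.comp (g := fun z : ℤ => decide (z % 2 = 1))
    (f := fun r : ℝ => ⌊r * 2 ^ (n + 1)⌋) .of_discrete (Int.measurable_floor.comp h1)

lemma ml16_coin_le_one (s : Set (ℕ → Bool)) : coin s ≤ 1 := by
  refine le_trans (measure_mono (Set.subset_univ s)) (le_of_eq ?_)
  rw [coin, Measure.map_apply ml16_binSeq_measurable MeasurableSet.univ, Set.preimage_univ,
    Measure.restrict_apply MeasurableSet.univ, Set.univ_inter, Real.volume_Ioc]
  norm_num

/-! ### W membership via evaln -/

lemma ml16_mem_W_iff (e : ℕ) (b : List Bool) :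
    b ∈ W e ↔ ∃ s y, y ∈ evaln s (Denumerable.ofNat Code e) (encode b) := by
  constructor
  · intro h
    obtain ⟨y, hy⟩ := Part.dom_iff_mem.mp h
    obtain ⟨s, hs⟩ := evaln_complete.mp hy
    exact ⟨s, y, hs⟩
  · rintro ⟨s, y, hy⟩
    exact Part.dom_iff_mem.mpr ⟨y, evaln_sound hy⟩

/-! ### the sense-1 test built from a sense-2 test -/

/-- Is there a prefix of `b` seen in `W (f k)` within `b.length` steps? -/
def ml16Step (f : ℕ → ℕ) (b : List Bool) (k : ℕ) : Bool :=
  (List.range (b.length + 1)).any fun i =>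
    (Nat.Partrec.Code.evaln b.length (Denumerable.ofNat Nat.Partrec.Code (f k))
      (Encodable.encode (b.take i))).isSome

lemma ml16Step_iff (f : ℕ → ℕ) (b : List Bool) (k : ℕ) :
    ml16Step f b k = true ↔ ∃ p, p <+: b ∧
      (evaln b.length (Denumerable.ofNat Code (f k)) (encode p)).isSome = true := by
  rw [ml16Step, List.any_eq_true]
  constructor
  · rintro ⟨i, _, h⟩; exact ⟨b.take i, List.take_prefix i b, h⟩
  · rintro ⟨p, hp, h⟩
    refine ⟨p.length, List.mem_range.mpr (Nat.lt_succ_of_le hp.length_le), ?_⟩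
    rwa [← List.prefix_iff_eq_take.mp hp]

def ml16Q (f : ℕ → ℕ) (b : List Bool) : ℕ → Bool
  | 0 => ml16Step f b 0
  | m + 1 => ml16Q f b m && ml16Step f b (m + 1)

lemma ml16Q_iff (f : ℕ → ℕ) (b : List Bool) (m : ℕ) :
    ml16Q f b m = true ↔ ∀ k ≤ m, ml16Step f b k = true := by
  induction m with
  | zero => simp [ml16Q, Nat.le_zero]
  | succ m ih =>
    rw [ml16Q, Bool.and_eq_true, ih]
    constructor
    · rintro ⟨h1, h2⟩ k hk
      rcases Nat.lt_succ_iff_lt_or_eq.mp (Nat.lt_succ_of_le hk) with h | h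
      · exact h1 k (Nat.lt_succ_iff.mp h)
      · subst h; exact h2
    · intro h
      exact ⟨fun k hk => h k (le_trans hk (Nat.le_succ m)), h (m + 1) le_rfl⟩

def ml16R (f : ℕ → ℕ) (b : List Bool) : ℕ → ℕ
  | 0 => 0
  | n + 1 => bif ml16Q f b (n + 1) then n + 1 else ml16R f b n

lemma ml16R_ge (f : ℕ → ℕ) (b : List Bool) {m n : ℕ} (hmn : m ≤ n)
    (hq : ml16Q f b m = true) : m ≤ ml16R f b n := by
  induction n with
  | zero => omega
  | succ n ih =>
    rw [ml16R]
    cases hc : ml16Q f b (n + 1) with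
    | true => simpa using hmn
    | false =>
      rcases Nat.lt_succ_iff_lt_or_eq.mp (Nat.lt_succ_of_le hmn) with h | h
      · simpa using ih (Nat.lt_succ_iff.mp h)
      · subst h; rw [hq] at hc; cases hc

lemma ml16R_q (f : ℕ → ℕ) (b : List Bool) {n : ℕ} (h : ml16R f b n ≠ 0) :
    ml16Q f b (ml16R f b n) = true := by
  induction n with
  | zero => simp [ml16R] at h
  | succ n ih =>
    rw [ml16R] at h ⊢
    cases hc : ml16Q f b (n + 1) with
    | true => simpa using hc
    | false =>
      rw [hc] at h
      simp only [cond_false] at h ⊢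
      exact ih h

def ml16T (f : ℕ → ℕ) (b : List Bool) : ℕ := ml16R f b b.length

/-! ### computability of ml16T -/

lemma ml16_any_eq_foldr {α : Type*} (l : List α) (p : α → Bool) :
    l.any p = l.foldr (fun a r => p a || r) false := by
  induction l with
  | nil => rfl
  | cons a l ih => simp [ih]

lemma ml16_take_eq {α : Type*} (l : List α) (i : ℕ) :
    l.take i = (List.range i).flatMap fun j => (l[j]?).toList := by
  induction i with
  | zero => simp
  | succ i ih =>
    rw [List.range_succ, List.flatMap_append, ← ih, List.take_succ]
    simp

lemma ml16_toList_prim : Primrec (fun o : Option Bool => o.toList) := by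
  refine (Primrec.option_casesOn Primrec.id (Primrec.const ([] : List Bool))
    ((Primrec.list_cons.comp Primrec.snd (Primrec.const ([] : List Bool))).to₂)).of_eq ?_
  intro o; cases o <;> rfl

lemma ml16_take_prim : Primrec₂ fun (l : List Bool) (i : ℕ) => l.take i := by
  have h : Primrec fun p : List Bool × ℕ =>
      (List.range p.2).flatMap fun j => (p.1[j]?).toList :=
    Primrec.list_flatMap (Primrec.list_range.comp Primrec.snd)
      ((ml16_toList_prim.comp
        (Primrec.list_getElem?.comp (Primrec.fst.comp Primrec.fst) Primrec.snd)).to₂)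
  exact Primrec.to₂ (h.of_eq fun p => (ml16_take_eq p.1 p.2).symm)

lemma ml16_A_prim : Primrec₂ fun (b : List Bool) (c : Code) =>
    (List.range (b.length + 1)).any fun i =>
      (evaln b.length c (encode (b.take i))).isSome := by
  have inner : Primrec fun p : (List Bool × Code) × ℕ =>
      (evaln p.1.1.length p.1.2 (encode (p.1.1.take p.2))).isSome :=
    Primrec.option_isSome.comp (primrec_evaln.comp
      (Primrec.pair
        (Primrec.pair (Primrec.list_length.comp (Primrec.fst.comp Primrec.fst))
          (Primrec.snd.comp Primrec.fst))
        (Primrec.encode.comp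
          (ml16_take_prim.comp (Primrec.fst.comp Primrec.fst) Primrec.snd))))
  have hh : Primrec fun p : (List Bool × Code) × ℕ × Bool =>
      (evaln p.1.1.length p.1.2 (encode (p.1.1.take p.2.1))).isSome || p.2.2 :=
    (Primrec.dom_bool₂ (· || ·)).comp
      (inner.comp (Primrec.pair Primrec.fst (Primrec.fst.comp Primrec.snd)))
      (Primrec.snd.comp Primrec.snd)
  have hfold : Primrec fun a : List Bool × Code =>
      (List.range (a.1.length + 1)).foldr
        (fun i r => (evaln a.1.length a.2 (encode (a.1.take i))).isSome || r) false :=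
    Primrec.list_foldr
      (Primrec.list_range.comp (Primrec.succ.comp (Primrec.list_length.comp Primrec.fst)))
      (Primrec.const false) hh.to₂
  exact Primrec.to₂ (hfold.of_eq fun a => (ml16_any_eq_foldr _ _).symm)

lemma ml16Step_comp {f : ℕ → ℕ} (hf : Computable f) :
    Computable₂ (ml16Step f) := by
  have : Computable fun p : List Bool × ℕ =>
      (fun (b : List Bool) (c : Code) => (List.range (b.length + 1)).any fun i =>
        (evaln b.length c (encode (b.take i))).isSome) p.1
        (Denumerable.ofNat Code (f p.2)) :=
    ml16_A_prim.to_comp.comp Computable.fst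
      ((Primrec.ofNat Code).to_comp.comp (hf.comp Computable.snd))
  exact Computable.to₂ (this.of_eq fun p => rfl)

lemma ml16Q_comp {f : ℕ → ℕ} (hf : Computable f) : Computable₂ (ml16Q f) := by
  have step := ml16Step_comp hf
  have hh : Computable fun p : (List Bool × ℕ) × ℕ × Bool =>
      p.2.2 && ml16Step f p.1.1 (p.2.1 + 1) :=
    (Primrec.dom_bool₂ (· && ·)).to_comp.comp
      (Computable.snd.comp Computable.snd)
      (step.comp (Computable.fst.comp Computable.fst)
        (Computable.succ.comp (Computable.fst.comp Computable.snd)))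
  have h : Computable fun a : List Bool × ℕ =>
      Nat.rec (motive := fun _ => Bool) (ml16Step f a.1 0)
        (fun y IH => IH && ml16Step f a.1 (y + 1)) a.2 :=
    Computable.nat_rec Computable.snd
      (step.comp Computable.fst (Computable.const 0)) hh.to₂
  have h2 : Computable fun a : List Bool × ℕ => ml16Q f a.1 a.2 := by
    refine h.of_eq fun a => ?_
    induction a.2 with
    | zero => rfl
    | succ n ih => rw [ml16Q, ← ih]
  exact h2.to₂

lemma ml16R_comp {f : ℕ → ℕ} (hf : Computable f) : Computable₂ (ml16R f) := by
  have q := ml16Q_comp hf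
  have hh : Computable fun p : (List Bool × ℕ) × ℕ × ℕ =>
      bif ml16Q f p.1.1 (p.2.1 + 1) then p.2.1 + 1 else p.2.2 :=
    Computable.cond
      (q.comp (Computable.fst.comp Computable.fst)
        (Computable.succ.comp (Computable.fst.comp Computable.snd)))
      (Computable.succ.comp (Computable.fst.comp Computable.snd))
      (Computable.snd.comp Computable.snd)
  have h : Computable fun a : List Bool × ℕ =>
      Nat.rec (motive := fun _ => ℕ) 0
        (fun y IH => bif ml16Q f a.1 (y + 1) then y + 1 else IH) a.2 :=
    Computable.nat_rec Computable.snd (Computable.const 0) hh.to₂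
  have h2 : Computable fun a : List Bool × ℕ => ml16R f a.1 a.2 := by
    refine h.of_eq fun a => ?_
    induction a.2 with
    | zero => rfl
    | succ n ih => rw [ml16R, ← ih]
  exact h2.to₂

lemma ml16T_comp {f : ℕ → ℕ} (hf : Computable f) : Computable (ml16T f) :=
  (ml16R_comp hf).comp Computable.id Primrec.list_length.to_comp

end ML16

/-- The two formulations of Martin-Löf randomness coincide. -/
theorem stmt16 (x : ℕ → Bool) :
    (∀ t : List Bool →. ℕ, MLTest1 t → Passes1 x t) ↔
      (∀ f : ℕ → ℕ, MLTest f → ¬ Fails x f) := by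
  open Nat.Partrec (Code) in
  open Nat.Partrec.Code in
  open Encodable in
  constructor
  · -- sense-1 passing implies sense-2 randomness
    intro hp f hf hFails
    obtain ⟨hfc, hfμ⟩ := hf
    have htest : MLTest1 (fun b => Part.some (ml16T f b)) := by
      constructor
      · exact ml16T_comp hfc
      · intro m
        have hset : {b : List Bool | ∃ v ∈ (Part.some (ml16T f b) : Part ℕ), m ≤ v}
            = {b | m ≤ ml16T f b} := by
          ext b; simp [Part.mem_some_iff]
        rw [hset]
        match m with
        | 0 => simpa using ml16_coin_le_one _
        | m + 1 =>
          refine le_trans (measure_mono ?_) (hfμ (m + 1))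
          refine subset_trans (ml16_cyl_mono ?_) (ml16_cyl_prefix _)
          intro b hb
          have hb' : m + 1 ≤ ml16T f b := hb
          have h0 : ml16T f b ≠ 0 := by omega
          have hq := ml16R_q f b (n := b.length) h0
          have hstep : ml16Step f b (m + 1) = true :=
            (ml16Q_iff f b _).mp hq (m + 1) hb'
          obtain ⟨p, hpb, hsome⟩ := (ml16Step_iff f b (m + 1)).mp hstep
          obtain ⟨y, hy⟩ := Option.isSome_iff_exists.mp hsome
          exact ⟨p, hpb, (ml16_mem_W_iff _ _).mpr ⟨b.length, y, hy⟩⟩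
    obtain ⟨B, hB⟩ := hp _ htest
    have hstepN : ∀ k, ∃ N, ∀ n, N ≤ n → ml16Step f (pref x n) k = true := by
      intro k
      obtain ⟨b, hbW, hbp⟩ := hFails k
      obtain ⟨s, y, hy⟩ := (ml16_mem_W_iff _ _).mp hbW
      refine ⟨max b.length s, fun n hn => ?_⟩
      rw [ml16Step_iff]
      refine ⟨b, ?_, ?_⟩
      · have htk : (pref x n).take b.length = b := by
          rw [ml16_take_pref x (le_trans (le_max_left _ _) hn), hbp]
        rw [← htk]; exact List.take_prefix _ _
      · rw [ml16_pref_length]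
        have hmono := Nat.Partrec.Code.evaln_mono (le_trans (le_max_right _ _) hn) hy
        exact Option.isSome_iff_exists.mpr ⟨y, Option.mem_def.mp hmono⟩
    choose N hN using hstepN
    have hq : ml16Q f (pref x (max (B + 1) ((Finset.range (B + 2)).sup N))) (B + 1) = true := by
      refine (ml16Q_iff _ _ _).mpr fun k hk => hN k _ ?_
      exact le_trans (Finset.le_sup (Finset.mem_range.mpr (by omega))) (le_max_right _ _)
    have hge : B + 1 ≤ ml16T f (pref x (max (B + 1) ((Finset.range (B + 2)).sup N))) := by
      rw [ml16T, ml16_pref_length]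
      exact ml16R_ge f _ (le_max_left _ _) hq
    have hvB := hB (max (B + 1) ((Finset.range (B + 2)).sup N)) _ (Part.mem_some _)
    omega
  · -- sense-2 randomness implies sense-1 passing
    intro hr t ht
    obtain ⟨hpt, hμ⟩ := ht
    by_contra hnp
    rw [Passes1] at hnp
    push_neg at hnp
    have ht' : Partrec fun p : ℕ × List Bool =>
        (t p.2).bind fun v => bif decide (p.1 ≤ v) then Part.some 0 else Part.none := by
      have hc : Computable fun q : (ℕ × List Bool) × ℕ => decide (q.1.1 ≤ q.2) :=
        (Primrec.nat_le.comp (Primrec.fst.comp Primrec.fst) Primrec.snd).decide.to_comp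
      have hcond : Partrec fun q : (ℕ × List Bool) × ℕ =>
          bif decide (q.1.1 ≤ q.2) then Part.some 0 else Part.none :=
        Partrec.cond hc (Partrec.const' (Part.some 0)) Partrec.none
      exact (hpt.comp Computable.snd).bind hcond.to₂
    obtain ⟨c, hcode⟩ := Nat.Partrec.Code.exists_code.mp ht'
    have hW : ∀ (m : ℕ) (b : List Bool),
        b ∈ W (encode (c.curry m)) ↔ ∃ v ∈ t b, m ≤ v := by
      intro m b
      show ((Denumerable.ofNat Code (encode (c.curry m))).eval (encode b)).Dom ↔ _
      rw [Denumerable.ofNat_encode, eval_curry, hcode]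
      have hd : (Encodable.decode (α := ℕ × List Bool) (Nat.pair m (encode b))) = some (m, b) := by
        have h1 : Nat.pair m (encode b) = encode (m, b) := by
          simp [Encodable.encode_prod_val]
        rw [h1, Encodable.encodek]
      simp only [hd, Part.coe_some, Part.bind_some]
      constructor
      · intro h
        obtain ⟨y, hy⟩ := Part.dom_iff_mem.mp h
        obtain ⟨z, hz, -⟩ := (Part.mem_map_iff _).mp hy
        obtain ⟨v, hv, hcond⟩ := Part.mem_bind_iff.mp hz
        by_cases hm : m ≤ v
        · exact ⟨v, hv, hm⟩
        · simp [hm] at hcond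
      · rintro ⟨v, hv, hm⟩
        refine Part.dom_iff_mem.mpr ⟨encode (0 : ℕ), (Part.mem_map_iff _).mpr ⟨0, ?_, rfl⟩⟩
        exact Part.mem_bind_iff.mpr ⟨v, hv, by simp [hm]⟩
    have hf2 : Computable fun m => encode (c.curry m) :=
      Primrec.to_comp (Primrec.encode.comp (primrec₂_curry.comp (Primrec.const c) Primrec.id))
    have hWset : ∀ m, W (encode (c.curry m)) = {b | ∃ v ∈ t b, m ≤ v} :=
      fun m => Set.ext fun b => hW m b
    refine hr (fun m => encode (c.curry m)) ⟨hf2, fun n => ?_⟩ (fun m => ?_)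
    · rw [hWset n]; exact hμ n
    · obtain ⟨n, v, hv, hlt⟩ := hnp m
      refine ⟨pref x n, ?_, by rw [ml16_pref_length]⟩
      rw [hWset m]
      exact ⟨v, hv, le_of_lt hlt⟩
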